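/- For every integer k ≥ 2 and every even integer ℓ ≥ 4, the k-uniform expansion C^{(k)}_ℓ of the cycle C_ℓ is obligatory. -/

import Mathlib

open Cardinal

universe u

/-- A colouring `f` of the vertices is proper for the edge set `E` if no edge
is monochromatic. -/
def IsProperColoring {V : Type*} {α : Type*} (E : Set (Set V)) (f : V → α) : Prop :=
  ∀ e ∈ E, ∃ x ∈ e, ∃ y ∈ e, f x ≠ f y

/-- The chromatic number of the hypergraph `(V, E)`. -/
noncomputable def chromaticNumber (V : Type u) (E : Set (Set V)) : Cardinal.{u} :=
  sInf { κ : Cardinal.{u} | ∃ (α : Type u) (f : V → α), #α = κ ∧ IsProperColoring E f }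

/-- `(V, E)` contains a subhypergraph isomorphic to the `k`-uniform expansion
`C^{(k)}_ℓ` of the cycle `C_ℓ`: there are distinct vertices `x i` for `i ∈ ZMod ℓ`
and edges `e i ⊇ {x i, x (i+1)}`, two distinct such edges intersecting exactly in
the intersection of the corresponding graph edges. -/
def ContainsExpansionCycle (k l : ℕ) {V : Type u} (E : Set (Set V)) : Prop :=
  ∃ (x : ZMod l → V) (e : ZMod l → Set V),
    Function.Injective x ∧
    (∀ i, e i ∈ E) ∧
    (∀ i, x i ∈ e i ∧ x (i + 1) ∈ e i) ∧
    ∀ i j, i ≠ j → e i ∩ e j = ({x i, x (i + 1)} : Set V) ∩ {x j, x (j + 1)}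

section ObligatoryAuxSection

open Set

namespace ObligatoryAux

section Helpers

lemma uncountable_fiber {α : Type u} {β : Type v} [Countable β] {s : Set α}
    (hs : ¬ s.Countable) (f : α → β) : ∃ b, ¬ {a | a ∈ s ∧ f a = b}.Countable := by
  by_contra h
  push_neg at h
  apply hs
  have hsub : s ⊆ ⋃ b : β, {a | a ∈ s ∧ f a = b} := by
    intro a ha; exact mem_iUnion.2 ⟨f a, ha, rfl⟩
  exact (Set.countable_iUnion h).mono hsub

lemma uncountable_of_infinite_fibers {α β : Type u} {s : Set α} (f : α → β)
    (hs : ¬ s.Countable) (hfib : ∀ b, {a | a ∈ s ∧ f a = b}.Countable) :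
    ¬ (f '' s).Countable := by
  intro him
  apply hs
  have hsub : s ⊆ ⋃ b ∈ f '' s, {a | a ∈ s ∧ f a = b} := by
    intro a ha
    exact Set.mem_biUnion ⟨a, ha, rfl⟩ ⟨ha, rfl⟩
  exact (Set.Countable.biUnion him fun b _ => hfib b).mono hsub

/-- The uncountable Δ-system lemma. -/
lemma delta_system {ι : Type u} {α : Type v} [DecidableEq α] :
    ∀ (n : ℕ) (I : Set ι) (A : ι → Finset α), ¬ I.Countable →
    (∀ i ∈ I, (A i).card ≤ n) →
    ∃ (J : Set ι) (K : Finset α), J ⊆ I ∧ ¬ J.Countable ∧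
      ∀ i ∈ J, ∀ j ∈ J, i ≠ j → A i ∩ A j = K := by
  intro n
  induction n with
  | zero =>
    intro I A hI hc
    refine ⟨I, ∅, le_refl _, hI, fun i hi j hj _ => ?_⟩
    have h1 : A i = ∅ := Finset.card_eq_zero.1 (le_antisymm (hc i hi) (Nat.zero_le _))
    simp [h1]
  | succ n ih =>
    intro I A hI hc
    by_cases hx : ∃ x : α, ¬ {i | i ∈ I ∧ x ∈ A i}.Countable
    · obtain ⟨x, hx⟩ := hx
      obtain ⟨J, K, hJsub, hJunc, hJ⟩ := ih {i | i ∈ I ∧ x ∈ A i} (fun i => (A i).erase x) hx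
        (by
          intro i hi
          have := hc i hi.1
          have h2 : ((A i).erase x).card = (A i).card - 1 := Finset.card_erase_of_mem hi.2
          show ((A i).erase x).card ≤ n
          omega)
      refine ⟨J, insert x K, fun i hi => (hJsub hi).1, hJunc, ?_⟩
      intro i hi j hj hij
      have h1 : (A i).erase x ∩ (A j).erase x = K := hJ i hi j hj hij
      have hxi : x ∈ A i := (hJsub hi).2
      have hxj : x ∈ A j := (hJsub hj).2
      ext y
      simp only [Finset.mem_inter, Finset.mem_insert]
      constructor
      · rintro ⟨hyi, hyj⟩
        by_cases hyx : y = x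
        · exact Or.inl hyx
        · right
          rw [← h1]
          simp [Finset.mem_erase, hyx, hyi, hyj]
      · rintro (rfl | hyK)
        · exact ⟨hxi, hxj⟩
        · rw [← h1] at hyK
          simp only [Finset.mem_inter, Finset.mem_erase] at hyK
          exact ⟨hyK.1.2, hyK.2.2⟩
    · push_neg at hx
      -- all element-fibers countable: find an uncountable pairwise disjoint subfamily by Zorn
      obtain ⟨M, hM⟩ := zorn_subset
        {J : Set ι | J ⊆ I ∧ ∀ i ∈ J, ∀ j ∈ J, i ≠ j → A i ∩ A j = ∅}
        (by
          intro c hcS hchain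
          refine ⟨⋃₀ c, ⟨?_, ?_⟩, fun s hs => subset_sUnion_of_mem hs⟩
          · intro i hi
            obtain ⟨s, hs, his⟩ := hi
            exact (hcS hs).1 his
          · intro i hi j hj hij
            obtain ⟨s, hs, his⟩ := hi
            obtain ⟨t, ht, hjt⟩ := hj
            rcases hchain.total hs ht with hst | hts
            · exact (hcS ht).2 i (hst his) j hjt hij
            · exact (hcS hs).2 i his j (hts hjt) hij)
      by_cases hMc : M.Countable
      · exfalso
        apply hI
        have hU : (⋃ j ∈ M, (A j : Set α)).Countable :=
          hMc.biUnion fun j _ => (A j).countable_toSet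
        have hcov : I ⊆ M ∪ ⋃ x ∈ ⋃ j ∈ M, (A j : Set α), {i | i ∈ I ∧ x ∈ A i} := by
          intro i hi
          by_cases hiM : i ∈ M
          · exact Or.inl hiM
          · -- by maximality, insert i M fails the property
            have : ¬ (insert i M ∈ {J : Set ι | J ⊆ I ∧ ∀ i ∈ J, ∀ j ∈ J, i ≠ j → A i ∩ A j = ∅}) := by
              intro hmem
              have := hM.2 hmem (subset_insert i M)
              exact hiM (this (mem_insert i M))
            simp only [mem_setOf_eq, not_and] at this
            have hsub : insert i M ⊆ I := insert_subset hi hM.1.1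
            have := this hsub
            push_neg at this
            obtain ⟨a, ha, b, hb, hab, hne⟩ := this
            -- one of a, b is i, the other in M
            have key : ∃ j ∈ M, A i ∩ A j ≠ ∅ := by
              rcases ha with rfl | haM
              · rcases hb with rfl | hbM
                · exact absurd rfl hab
                · exact ⟨b, hbM, hne.ne_empty⟩
              · rcases hb with rfl | hbM
                · refine ⟨a, haM, fun h => hne.ne_empty ?_⟩
                  rwa [Finset.inter_comm] at h
                · exact absurd (hM.1.2 a haM b hbM hab) hne.ne_empty
            obtain ⟨j, hjM, hne2⟩ := key
            obtain ⟨x, hxmem⟩ := Finset.nonempty_iff_ne_empty.2 hne2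
            rw [Finset.mem_inter] at hxmem
            right
            refine Set.mem_biUnion (Set.mem_biUnion hjM hxmem.2) ⟨hi, hxmem.1⟩
        refine Set.Countable.mono hcov ?_
        exact hMc.union (hU.biUnion fun x _ => hx x)
      · exact ⟨M, ∅, hM.1.1, hMc, hM.1.2⟩

end Helpers


variable {V : Type u}

/-- `XFan 𝒜 m w` is the set of vertices `v` admitting an "exact fan" of edges
to the `m` vertices `w 0, …, w (m-1)`. -/
def XFan (𝒜 : Set (Set V)) (m : ℕ) (w : Fin m → V) : Set V :=
  {v | (∀ i, v ≠ w i) ∧ ∃ Ef : Fin m → Set V,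
    (∀ i, Ef i ∈ 𝒜 ∧ v ∈ Ef i ∧ w i ∈ Ef i) ∧ ∀ i j, i ≠ j → Ef i ∩ Ef j = {v}}

def MonoOn (f : V → ℕ) (e : Set V) (c : ℕ) : Prop := ∀ x ∈ e, f x = c

def InBad (𝒜 : Set (Set V)) (g : V → ℕ) (P : Set V) (v : V) : Set ℕ :=
  {c | ∃ e ∈ 𝒜, v ∈ e ∧ (e \ {v}).Nonempty ∧ e \ {v} ⊆ P ∧ MonoOn g (e \ {v}) c}

lemma mono_disjoint {f : V → ℕ} {A B : Set V} {c c' : ℕ} (hA : MonoOn f A c)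
    (hB : MonoOn f B c') (hcc : c ≠ c') (z : V) (hzA : z ∈ A) (hzB : z ∈ B) : False :=
  hcc ((hA z hzA).symm.trans (hB z hzB))

/-- a set of naturals with an injection into a finite set is finite -/
lemma finite_of_inj_into {T : Set ℕ} {S : Set V} (hS : S.Finite) (φ : ℕ → V)
    (hmaps : ∀ c ∈ T, φ c ∈ S) (hinj : ∀ c ∈ T, ∀ c' ∈ T, φ c = φ c' → c = c') :
    T.Finite :=
  Set.Finite.of_finite_image (hS.subset (by rintro _ ⟨c, hc, rfl⟩; exact hmaps c hc))
    (fun a ha b hb hab => hinj a ha b hb hab)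

section Crec

variable (𝒜 : Set (Set V)) (m : ℕ)

/-- Main colouring lemma: if all exact-fan neighbourhoods of injective `m`-tuples are
countable, then a layered greedy colouring succeeds. -/
theorem Crec (h𝒜 : ∀ e ∈ 𝒜, e.Finite ∧ e.Nontrivial) (hm : 1 ≤ m)
    (hX : ∀ w : Fin m → V, Function.Injective w → (XFan 𝒜 m w).Countable) :
    ∀ (κ₀ : Cardinal.{u}) (U P : Set V) (g : V → ℕ), #U = κ₀ → Disjoint U P →
      (∀ v ∈ U, (InBad 𝒜 g P v).Finite) →
      ∃ f : V → ℕ, (∀ x, x ∉ U → f x = g x) ∧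
        ∀ e ∈ 𝒜, e ⊆ U ∪ P → (e ∩ U).Nonempty → ¬ ∃ c, MonoOn f e c := by
  intro κ₀
  induction κ₀ using WellFounded.induction (hwf := Cardinal.lt_wf) with
  | _ κ SIH =>
  intro U P g hUκ hdis hctx
  subst hUκ
  classical
  by_cases hcnt : U.Countable
  · -- countable case : greedy colouring along an injection into ℕ
    obtain ⟨ι, hι⟩ : ∃ f : U → ℕ, Function.Injective f :=
      Set.countable_iff_exists_injective.mp hcnt
    have hwf : WellFounded (fun a b : ↥U => ι a < ι b) :=
      InvImage.wf ι (Nat.lt_wfRel.wf)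
    set Small : ↥U → Set V := fun u => {x | ∃ hx : x ∈ U, ι ⟨x, hx⟩ < ι u} with hSmall
    let F : ↥U → ℕ := hwf.fix (fun u ih =>
      sInf {c | ¬ ∃ e ∈ 𝒜, (u : V) ∈ e ∧ (e \ {(u : V)}).Nonempty ∧
        e \ {(u : V)} ⊆ P ∪ Small u ∧ MonoOn (fun x =>
          if hx : x ∈ U then (if hlt : ι ⟨x, hx⟩ < ι u then ih ⟨x, hx⟩ hlt else g x) else g x)
          (e \ {(u : V)}) c})
    set f : V → ℕ := fun x => if hx : x ∈ U then F ⟨x, hx⟩ else g x with hf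
    have hfg : ∀ x, x ∉ U → f x = g x := fun x hx => dif_neg hx
    set Bad : ↥U → Set ℕ := fun u => {c | ∃ e ∈ 𝒜, (u : V) ∈ e ∧ (e \ {(u : V)}).Nonempty ∧
        e \ {(u : V)} ⊆ P ∪ Small u ∧ MonoOn f (e \ {(u : V)}) c} with hBad
    have hprevf : ∀ (u : ↥U) (e : Set V), e \ {(u : V)} ⊆ P ∪ Small u →
        ∀ z ∈ e \ {(u : V)},
          (fun x => if hx : x ∈ U then
            (if hlt : ι ⟨x, hx⟩ < ι u then F ⟨x, hx⟩ else g x) else g x) z = f z := by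
      intro u e hsub z hz
      rcases hsub hz with hzP | hzS
      · have hzU : z ∉ U := fun h => (Set.disjoint_left.mp hdis h) hzP
        simp [hf, dif_neg hzU]
      · obtain ⟨hzU, hzlt⟩ := hzS
        simp [hf, dif_pos hzU, dif_pos hzlt]
    have hFval : ∀ u : ↥U, F u = sInf {c | c ∉ Bad u} := by
      intro u
      have h1 : F u = (fun (u : ↥U) (ih : ∀ y : ↥U, ι y < ι u → ℕ) =>
        sInf {c | ¬ ∃ e ∈ 𝒜, (u : V) ∈ e ∧ (e \ {(u : V)}).Nonempty ∧
          e \ {(u : V)} ⊆ P ∪ Small u ∧ MonoOn (fun x =>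
            if hx : x ∈ U then (if hlt : ι ⟨x, hx⟩ < ι u then ih ⟨x, hx⟩ hlt else g x) else g x)
            (e \ {(u : V)}) c}) u (fun y _ => F y) :=
        hwf.fix_eq _ u
      rw [h1]
      beta_reduce
      congr 1
      ext c
      simp only [mem_setOf_eq, hBad]
      constructor
      · intro hc hex
        apply hc
        obtain ⟨e, he, hue, hne, hsub, hmono⟩ := hex
        exact ⟨e, he, hue, hne, hsub, fun z hz => (hprevf u e hsub z hz) ▸ hmono z hz⟩
      · intro hc hex
        apply hc
        obtain ⟨e, he, hue, hne, hsub, hmono⟩ := hex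
        exact ⟨e, he, hue, hne, hsub, fun z hz => (hprevf u e hsub z hz).symm ▸ hmono z hz⟩
    have hSmallFin : ∀ u : ↥U, (Small u).Finite := by
      intro u
      have hsub : Small u ⊆ Subtype.val '' {x : ↥U | ι x < ι u} := by
        rintro x ⟨hx, hlt⟩; exact ⟨⟨x, hx⟩, hlt, rfl⟩
      refine Set.Finite.subset (Set.Finite.image _ ?_) hsub
      have hsub2 : {x : ↥U | ι x < ι u} ⊆ ι ⁻¹' (Set.Iio (ι u)) := fun x hx => hx
      exact (Set.Finite.preimage (hι.injOn) (Set.finite_Iio _)).subset hsub2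
    have hBadFin : ∀ u : ↥U, (Bad u).Finite := by
      intro u
      have hsplit : Bad u ⊆ InBad 𝒜 g P ↑u ∪
          {c | ∃ e ∈ 𝒜, (u : V) ∈ e ∧ (e \ {(u : V)}).Nonempty ∧
            e \ {(u : V)} ⊆ P ∪ Small u ∧
            ((e \ {(u : V)}) ∩ Small u).Nonempty ∧ MonoOn f (e \ {(u : V)}) c} := by
        intro c hc
        obtain ⟨e, he, hue, hne, hsub, hmono⟩ := hc
        by_cases ht : ((e \ {(u : V)}) ∩ Small u).Nonempty
        · exact Or.inr ⟨e, he, hue, hne, hsub, ht, hmono⟩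
        · left
          have hsubP : e \ {(u : V)} ⊆ P := by
            intro z hz
            rcases hsub hz with h | h
            · exact h
            · exact absurd ⟨z, hz, h⟩ ht
          refine ⟨e, he, hue, hne, hsubP, fun z hz => ?_⟩
          rw [← hfg z (fun hU => (Set.disjoint_left.mp hdis hU) (hsubP hz))]
          exact hmono z hz
      refine Set.Finite.subset (Set.Finite.union (hctx ↑u u.2) ?_) hsplit
      have hwit : ∀ c ∈ {c | ∃ e ∈ 𝒜, (u : V) ∈ e ∧ (e \ {(u : V)}).Nonempty ∧
            e \ {(u : V)} ⊆ P ∪ Small u ∧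
            ((e \ {(u : V)}) ∩ Small u).Nonempty ∧ MonoOn f (e \ {(u : V)}) c},
          ∃ z, z ∈ Small u ∧ ∃ e, z ∈ e \ {(u : V)} ∧ MonoOn f (e \ {(u : V)}) c := by
        rintro c ⟨e, _, _, _, _, ⟨z, hz1, hz2⟩, hmono⟩
        exact ⟨z, hz2, e, hz1, hmono⟩
      haveI : Nonempty V := ⟨↑u⟩
      choose! z hzS eW hzeW hmonoW using hwit
      refine finite_of_inj_into (hSmallFin u) z hzS ?_
      intro c hc c' hc' hzz
      by_contra hne
      have h2 := hzeW c' hc'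
      rw [← hzz] at h2
      exact mono_disjoint (hmonoW c hc) (hmonoW c' hc') hne (z c) (hzeW c hc) h2
    refine ⟨f, hfg, ?_⟩
    rintro e he hesub ⟨u0, hu0e, hu0U⟩ ⟨c, hmono⟩
    obtain ⟨hef, hent⟩ := h𝒜 e he
    have hfinU : (e ∩ U).Finite := hef.subset inter_subset_left
    obtain ⟨xm, hxm, hmax⟩ := Set.Finite.exists_maximalFor
      (fun x : V => if hx : x ∈ U then ι ⟨x, hx⟩ else 0) (e ∩ U) hfinU ⟨u0, hu0e, hu0U⟩
    obtain ⟨hxme, hxmU⟩ := hxm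
    have hmax' : ∀ z (hz : z ∈ e ∩ U), ι ⟨z, hz.2⟩ ≤ ι ⟨xm, hxmU⟩ := by
      intro z hz
      by_contra hlt
      push_neg at hlt
      have h1 : (fun x : V => if hx : x ∈ U then ι ⟨x, hx⟩ else 0) xm ≤
          (fun x : V => if hx : x ∈ U then ι ⟨x, hx⟩ else 0) z := by
        simp only [dif_pos hz.2, dif_pos hxmU]
        exact le_of_lt hlt
      have h2 := hmax hz h1
      simp only [dif_pos hz.2, dif_pos hxmU] at h2
      omega
    have hcBad : c ∈ Bad ⟨xm, hxmU⟩ := by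
      refine ⟨e, he, hxme, ?_, ?_, fun z hz => hmono z hz.1⟩
      · obtain ⟨a, ha, b, hb, hab⟩ := hent
        rcases eq_or_ne a xm with rfl | hax
        · exact ⟨b, hb, fun h => hab (mem_singleton_iff.mp h).symm⟩
        · exact ⟨a, ha, fun h => hax (mem_singleton_iff.mp h)⟩
      · intro z hz
        obtain ⟨hze, hzxm⟩ := hz
        rcases hesub hze with hzU | hzP
        · right
          refine ⟨hzU, ?_⟩
          have hle := hmax' z ⟨hze, hzU⟩
          have hne2 : ι ⟨z, hzU⟩ ≠ ι ⟨xm, hxmU⟩ := by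
            intro hcon
            have := hι hcon
            apply hzxm
            simpa using congrArg Subtype.val this
          omega
        · exact Or.inl hzP
    have hfxm : f xm = sInf {c' | c' ∉ Bad ⟨xm, hxmU⟩} := by
      rw [hf]; simp only [dif_pos hxmU]; exact hFval ⟨xm, hxmU⟩
    have hnonempty : {c' | c' ∉ Bad ⟨xm, hxmU⟩}.Nonempty := by
      have := (hBadFin ⟨xm, hxmU⟩).infinite_compl
      exact this.nonempty
    have : f xm ∉ Bad ⟨xm, hxmU⟩ := by
      rw [hfxm]
      exact Nat.sInf_mem hnonempty
    exact this (hmono xm hxme ▸ hcBad)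
  · -- uncountable case
    have hbig : ℵ₀ < #(↥U) := by
      by_contra hle
      push_neg at hle
      exact hcnt (Set.countable_coe_iff.mp (Cardinal.mk_le_aleph0_iff.mp hle))
    set ι := (#(↥U)).ord.ToType with hι
    have hmkι : #ι = #(↥U) := by rw [hι, Cardinal.mk_toType, Cardinal.card_ord]
    obtain ⟨φ⟩ : Nonempty (ι ≃ ↥U) := Cardinal.eq.mp hmkι
    set clStep : Set V → Set V := fun X => X ∪
      ⋃ (w : {w : Fin m → V // Function.Injective w ∧ ∀ i, w i ∈ X}), (XFan 𝒜 m ↑w ∩ U)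
      with hclStep
    set Base : ι → Set V := fun b => Subtype.val '' (φ '' Set.Iic b) with hBase
    set W : ι → Set V := fun b => ⋃ (n : ULift.{u} ℕ), clStep^[n.down] (Base b) with hWdef
    have hstep_sub : ∀ X : Set V, X ⊆ clStep X := fun X => subset_union_left
    have hstep_mono : ∀ X Y : Set V, X ⊆ Y → clStep X ⊆ clStep Y := by
      intro X Y hXY z hz
      rcases hz with hz | hz
      · exact Or.inl (hXY hz)
      · obtain ⟨⟨w, hwinj, hwX⟩, hzs⟩ := mem_iUnion.mp hz
        exact Or.inr (mem_iUnion.mpr ⟨⟨w, hwinj, fun i => hXY (hwX i)⟩, hzs⟩)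
    have hit_mono : ∀ (n : ℕ) (X Y : Set V), X ⊆ Y → clStep^[n] X ⊆ clStep^[n] Y := by
      intro n
      induction n with
      | zero => intro X Y h; simpa using h
      | succ n ihn =>
        intro X Y h
        rw [Function.iterate_succ_apply', Function.iterate_succ_apply']
        exact hstep_mono _ _ (ihn X Y h)
    have hit_le : ∀ (n n' : ℕ), n ≤ n' → ∀ X : Set V, clStep^[n] X ⊆ clStep^[n'] X := by
      intro n n' h
      induction n' with
      | zero => rw [Nat.le_zero.mp h]; intro X; exact subset_rfl
      | succ n' ihn =>
        intro X
        rcases Nat.lt_or_ge n (n' + 1) with h2 | h2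
        · refine subset_trans (ihn (Nat.lt_succ_iff.mp h2) X) ?_
          rw [Function.iterate_succ_apply']
          exact hstep_sub _
        · have h3 : n = n' + 1 := le_antisymm h h2
          rw [h3]
    have hWmono : ∀ (b b' : ι), b ≤ b' → W b ⊆ W b' := by
      intro b b' hbb z hz
      obtain ⟨n, hn⟩ := mem_iUnion.mp hz
      refine mem_iUnion.mpr ⟨n, hit_mono _ _ _ ?_ hn⟩
      exact Set.image_mono (Set.image_mono (Set.Iic_subset_Iic.mpr hbb))
    have hBaseU : ∀ b, Base b ⊆ U := by
      rintro b _ ⟨⟨x, hx⟩, _, rfl⟩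
      exact hx
    have hitU : ∀ (n : ℕ) (b : ι), clStep^[n] (Base b) ⊆ U := by
      intro n
      induction n with
      | zero => intro b; simpa using hBaseU b
      | succ n ihn =>
        intro b
        rw [Function.iterate_succ_apply']
        rintro z (hz | hz)
        · exact ihn b hz
        · obtain ⟨_, hz2⟩ := mem_iUnion.mp hz
          exact hz2.2
    have hWU : ∀ b, W b ⊆ U := by
      intro b z hz
      obtain ⟨n, hn⟩ := mem_iUnion.mp hz
      exact hitU n.down b hn
    have hWclosed : ∀ (b : ι) (w : Fin m → V), Function.Injective w → (∀ i, w i ∈ W b) →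
        XFan 𝒜 m w ∩ U ⊆ W b := by
      intro b w hwinj hw
      have hn : ∀ i, ∃ n : ℕ, w i ∈ clStep^[n] (Base b) := by
        intro i
        obtain ⟨n, hn⟩ := mem_iUnion.mp (hw i)
        exact ⟨n.down, hn⟩
      choose ns hns using hn
      have hN : ∀ i, w i ∈ clStep^[Finset.univ.sup ns] (Base b) :=
        fun i => hit_le _ _ (Finset.le_sup (Finset.mem_univ i)) _ (hns i)
      intro z hz
      refine mem_iUnion.mpr ⟨ULift.up (Finset.univ.sup ns + 1), ?_⟩
      rw [Function.iterate_succ_apply']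
      exact Or.inr (mem_iUnion.mpr ⟨⟨w, hwinj, hN⟩, hz⟩)
    have hplus1 : ∀ a : Cardinal.{u}, a < #(↥U) → a + 1 < #(↥U) := by
      intro a ha
      rcases le_or_gt ℵ₀ a with h | h
      · rwa [Cardinal.add_one_eq h]
      · exact lt_trans (Cardinal.add_lt_aleph0 h Cardinal.one_lt_aleph0) hbig
    have hWcard : ∀ b, #(W b) < #(↥U) := by
      intro b
      have hBaselt : #(Base b) < #(↥U) := by
        have h1 : #(Base b) ≤ #(Set.Iic b) :=
          le_trans Cardinal.mk_image_le Cardinal.mk_image_le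
        refine lt_of_le_of_lt h1 ?_
        have h2 : #(Set.Iic b) ≤ #(Set.Iio b) + 1 := by
          rw [← Set.Iio_insert]
          exact Cardinal.mk_insert_le
        exact lt_of_le_of_lt h2 (hplus1 _ (Cardinal.mk_Iio_ord_toType b))
      set μ := max #(Base b) ℵ₀ with hμ
      have hμinf : ℵ₀ ≤ μ := le_max_right _ _
      have hμlt : μ < #(↥U) := max_lt hBaselt hbig
      have hstepcard : ∀ Y : Set V, #Y ≤ μ → #(clStep Y) ≤ μ := by
        intro Y hY
        have hsubcard : #({w : Fin m → V // Function.Injective w ∧ ∀ i, w i ∈ Y}) ≤ μ := by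
          have hinj : Function.Injective
              (fun (w : {w : Fin m → V // Function.Injective w ∧ ∀ i, w i ∈ Y}) (i : Fin m) =>
                (⟨w.1 i, w.2.2 i⟩ : ↥Y)) := by
            intro w w' h
            apply Subtype.ext
            funext i
            exact congrArg Subtype.val (congrFun h i)
          refine le_trans (Cardinal.mk_le_of_injective hinj) ?_
          have h3 : #(Fin m → ↥Y) = #(↥Y) ^ (m : Cardinal.{u}) := by
            rw [Cardinal.mk_arrow]
            simp [Cardinal.lift_uzero, Cardinal.mk_fin, Cardinal.lift_natCast]
          rw [h3]
          refine le_trans (Cardinal.power_le_power_right hY) ?_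
          rw [Cardinal.power_natCast]
          exact Cardinal.power_nat_le hμinf
        have hXFcard : ∀ w : {w : Fin m → V // Function.Injective w ∧ ∀ i, w i ∈ Y},
            #(XFan 𝒜 m ↑w ∩ U : Set V) ≤ ℵ₀ := by
          intro w
          rw [Cardinal.mk_le_aleph0_iff, Set.countable_coe_iff]
          exact ((hX w.1 w.2.1).mono inter_subset_left)
        have h5 : #(⋃ (w : {w : Fin m → V // Function.Injective w ∧ ∀ i, w i ∈ Y}),
            (XFan 𝒜 m ↑w ∩ U) : Set V) ≤ μ := by
          refine le_trans (Cardinal.mk_iUnion_le _) ?_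
          refine le_trans (mul_le_mul' hsubcard (ciSup_le' hXFcard)) ?_
          rw [Cardinal.mul_eq_max hμinf (le_refl ℵ₀)]
          exact max_le le_rfl hμinf
        refine le_trans (Cardinal.mk_union_le _ _) ?_
        refine le_trans (add_le_add hY h5) ?_
        rw [Cardinal.add_eq_self hμinf]
      have hitcard : ∀ n : ℕ, #(clStep^[n] (Base b)) ≤ μ := by
        intro n
        induction n with
        | zero =>
          rw [Function.iterate_zero_apply]
          exact le_max_left _ _
        | succ n ihn =>
          rw [Function.iterate_succ_apply']
          exact hstepcard _ ihn
      have h6 : #(W b) ≤ ℵ₀ * μ := by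
        refine le_trans (Cardinal.mk_iUnion_le _) ?_
        refine mul_le_mul' ?_ (ciSup_le' fun n => hitcard n.down)
        simp [Cardinal.mk_uLift]
      refine lt_of_le_of_lt h6 ?_
      rw [Cardinal.mul_eq_max (le_refl ℵ₀) hμinf]
      exact max_lt hbig hμlt
    have hcover : ∀ u : ↥U, (u : V) ∈ W (φ.symm u) := by
      intro u
      refine mem_iUnion.mpr ⟨ULift.up 0, ?_⟩
      show (u : V) ∈ Base (φ.symm u)
      exact ⟨φ (φ.symm u), ⟨φ.symm u, Set.mem_Iic.mpr le_rfl, rfl⟩, by simp⟩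
    have hwfι : WellFounded ((· < ·) : ι → ι → Prop) := wellFounded_lt
    let r : ↥U → ι := fun u => hwfι.min {b | (u : V) ∈ W b} ⟨φ.symm u, hcover u⟩
    have hrmem : ∀ u : ↥U, (u : V) ∈ W (r u) := by
      intro u
      have h0 := hwfι.min_mem {b | (u : V) ∈ W b} ⟨φ.symm u, hcover u⟩
      simpa [Set.mem_setOf_eq] using h0
    have hrmin : ∀ (u : ↥U) (b : ι), (u : V) ∈ W b → r u ≤ b := by
      intro u b hb
      show hwfι.min {b | (u : V) ∈ W b} ⟨φ.symm u, hcover u⟩ ≤ b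
      exact not_lt.mp (hwfι.not_lt_min _ hb)
    set D : ι → Set V := fun b => {x | ∃ hx : x ∈ U, r ⟨x, hx⟩ = b} with hD
    set PREV : ι → Set V := fun b => {x | ∃ hx : x ∈ U, r ⟨x, hx⟩ < b} with hPREV
    have hDW : ∀ b, D b ⊆ W b := by
      rintro b x ⟨hx, hrx⟩
      rw [← hrx]
      exact hrmem ⟨x, hx⟩
    have hDlt : ∀ b, #(D b) < #(↥U) :=
      fun b => lt_of_le_of_lt (Cardinal.mk_le_mk_of_subset (hDW b)) (hWcard b)
    have hdisj2 : ∀ b, Disjoint (D b) (P ∪ PREV b) := by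
      intro b
      rw [Set.disjoint_left]
      rintro x ⟨hxU, hxr⟩ (hxP | ⟨hxU', hxlt⟩)
      · exact (Set.disjoint_left.mp hdis hxU) hxP
      · have h2 : r ⟨x, hxU⟩ < b := hxlt
        rw [hxr] at h2
        exact absurd h2 (lt_irrefl b)
    have habs : ∀ (b : ι) (gb : V → ℕ), (∀ x ∈ P, gb x = g x) →
        ∀ x ∈ D b, (InBad 𝒜 gb (P ∪ PREV b) x).Finite := by
      intro b gb hgb x hxD
      obtain ⟨hxU, hxr⟩ := hxD
      have hsplit : InBad 𝒜 gb (P ∪ PREV b) x ⊆ InBad 𝒜 g P x ∪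
          {c | ∃ e ∈ 𝒜, x ∈ e ∧ (e \ {x}).Nonempty ∧ e \ {x} ⊆ P ∪ PREV b ∧
            ((e \ {x}) ∩ PREV b).Nonempty ∧ MonoOn gb (e \ {x}) c} := by
        intro c hc
        obtain ⟨e, he, hxe, hne, hsub, hmono⟩ := hc
        by_cases ht : ((e \ {x}) ∩ PREV b).Nonempty
        · exact Or.inr ⟨e, he, hxe, hne, hsub, ht, hmono⟩
        · left
          have hsubP : e \ {x} ⊆ P := by
            intro z hz
            rcases hsub hz with h | h
            · exact h
            · exact absurd ⟨z, hz, h⟩ ht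
          refine ⟨e, he, hxe, hne, hsubP, fun z hz => ?_⟩
          rw [← hgb z (hsubP hz)]
          exact hmono z hz
      refine Set.Finite.subset (Set.Finite.union (hctx x hxU) ?_) hsplit
      by_contra hinf
      set cs : Fin m → ℕ := fun t => ((Set.Infinite.natEmbedding _ hinf) t.val : ℕ) with hcs
      have hcsT : ∀ t, cs t ∈ {c | ∃ e ∈ 𝒜, x ∈ e ∧ (e \ {x}).Nonempty ∧
          e \ {x} ⊆ P ∪ PREV b ∧ ((e \ {x}) ∩ PREV b).Nonempty ∧ MonoOn gb (e \ {x}) c} :=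
        fun t => ((Set.Infinite.natEmbedding _ hinf) t.val).2
      have hcsinj : Function.Injective cs := by
        intro a b2 h
        have := (Set.Infinite.natEmbedding _ hinf).injective (Subtype.ext h)
        exact Fin.ext this
      have hwit : ∀ t : Fin m, ∃ (e : Set V) (z : V), e ∈ 𝒜 ∧ x ∈ e ∧ z ∈ e \ {x} ∧
          z ∈ PREV b ∧ MonoOn gb (e \ {x}) (cs t) := by
        intro t
        obtain ⟨e, he, hxe, _, _, ⟨z, hz1, hz2⟩, hmono⟩ := hcsT t
        exact ⟨e, z, he, hxe, hz1, hz2, hmono⟩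
      choose E Z hE hxE hZrest hZprev hmonoW using hwit
      have hrestdisj : ∀ t s : Fin m, t ≠ s → ∀ z, z ∈ E t \ {x} → z ∈ E s \ {x} → False := by
        intro t s hts z h1 h2
        exact mono_disjoint (hmonoW t) (hmonoW s) (fun hcc => hts (hcsinj hcc)) z h1 h2
      have hZinj : Function.Injective Z := by
        intro t s h
        by_contra hts
        refine hrestdisj t s hts (Z t) (hZrest t) ?_
        rw [h]
        exact hZrest s
      have hZU : ∀ t, Z t ∈ U := fun t => (hZprev t).choose
      have hZlt : ∀ t, r ⟨Z t, hZU t⟩ < b := fun t => (hZprev t).choose_spec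
      haveI : Nonempty (Fin m) := ⟨⟨0, hm⟩⟩
      obtain ⟨t0, _, htmax⟩ := Finset.exists_max_image Finset.univ
        (fun t => r ⟨Z t, hZU t⟩) ⟨⟨0, hm⟩, Finset.mem_univ _⟩
      have hZW : ∀ t, Z t ∈ W (r ⟨Z t0, hZU t0⟩) :=
        fun t => hWmono _ _ (htmax t (Finset.mem_univ t)) (hrmem ⟨Z t, hZU t⟩)
      have hxXF : x ∈ XFan 𝒜 m Z := by
        refine ⟨fun t hxZ => (hZrest t).2 (by rw [← hxZ]; exact rfl), E,
          fun t => ⟨hE t, hxE t, (hZrest t).1⟩, ?_⟩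
        intro i j hij
        ext z
        constructor
        · rintro ⟨hzi, hzj⟩
          by_contra hzx
          exact hrestdisj i j hij z ⟨hzi, hzx⟩ ⟨hzj, hzx⟩
        · intro hz
          rw [mem_singleton_iff] at hz
          subst hz
          exact ⟨hxE i, hxE j⟩
      have hxW : x ∈ W (r ⟨Z t0, hZU t0⟩) :=
        hWclosed _ Z hZinj hZW ⟨hxXF, hxU⟩
      have hle := hrmin ⟨x, hxU⟩ _ hxW
      rw [hxr] at hle
      exact absurd (lt_of_le_of_lt hle (hZlt t0)) (lt_irrefl b)
    have key : ∀ (b : ι) (gb : V → ℕ), (∀ x ∈ P, gb x = g x) →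
        ∃ f' : V → ℕ, (∀ x, x ∉ D b → f' x = gb x) ∧
          ∀ e ∈ 𝒜, e ⊆ D b ∪ (P ∪ PREV b) → (e ∩ D b).Nonempty → ¬ ∃ c, MonoOn f' e c :=
      fun b gb hgb => SIH (#(D b)) (hDlt b) (D b) (P ∪ PREV b) gb rfl (hdisj2 b) (habs b gb hgb)
    set G : ι → V → ℕ := hwfι.fix (fun b ih =>
      Classical.choose (key b (fun x =>
        if hx : x ∈ U then (if hlt : r ⟨x, hx⟩ < b then ih (r ⟨x, hx⟩) hlt x else g x) else g x)
        (fun x hxP => by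
          have hxU : x ∉ U := fun hU => (Set.disjoint_left.mp hdis hU) hxP
          simp [dif_neg hxU]))) with hG
    set gA : ι → V → ℕ := fun b x =>
      if hx : x ∈ U then (if _hlt : r ⟨x, hx⟩ < b then G (r ⟨x, hx⟩) x else g x) else g x
      with hgA
    have hGspec : ∀ b : ι, (∀ x, x ∉ D b → G b x = gA b x) ∧
        (∀ e ∈ 𝒜, e ⊆ D b ∪ (P ∪ PREV b) → (e ∩ D b).Nonempty → ¬ ∃ c, MonoOn (G b) e c) := by
      intro b
      have hagree : ∀ x ∈ P, gA b x = g x := fun x hxP => by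
        have hxU : x ∉ U := fun hU => (Set.disjoint_left.mp hdis hU) hxP
        simp [hgA, dif_neg hxU]
      have h1 : G b = Classical.choose (key b (gA b) hagree) := hwfι.fix_eq _ b
      rw [h1]
      exact Classical.choose_spec (key b (gA b) hagree)
    set f : V → ℕ := fun x => if hx : x ∈ U then G (r ⟨x, hx⟩) x else g x with hfdef
    refine ⟨f, fun x hx => dif_neg hx, ?_⟩
    rintro e he hesub ⟨u0, hu0e, hu0U⟩ ⟨c, hmono⟩
    obtain ⟨hef, _⟩ := h𝒜 e he
    have hfinU : (e ∩ U).Finite := hef.subset inter_subset_left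
    obtain ⟨xm, hxm, hmax⟩ := Set.Finite.exists_maximalFor
      (fun x : V => if hx : x ∈ U then r ⟨x, hx⟩ else r ⟨u0, hu0U⟩) (e ∩ U) hfinU
      ⟨u0, hu0e, hu0U⟩
    obtain ⟨hxme, hxmU⟩ := hxm
    have hmax' : ∀ z (hz : z ∈ e ∩ U), r ⟨z, hz.2⟩ ≤ r ⟨xm, hxmU⟩ := by
      intro z hz
      by_contra hlt
      push_neg at hlt
      have h1 : (fun x : V => if hx : x ∈ U then r ⟨x, hx⟩ else r ⟨u0, hu0U⟩) xm ≤
          (fun x : V => if hx : x ∈ U then r ⟨x, hx⟩ else r ⟨u0, hu0U⟩) z := by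
        simp only [dif_pos hz.2, dif_pos hxmU]
        exact hlt.le
      have h2 := hmax hz h1
      simp only [dif_pos hz.2, dif_pos hxmU] at h2
      exact absurd hlt (not_lt.mpr h2)
    have htrans : ∀ z ∈ e, G (r ⟨xm, hxmU⟩) z = f z := by
      intro z hze
      by_cases hzD : z ∈ D (r ⟨xm, hxmU⟩)
      · obtain ⟨hzU, hzr⟩ := hzD
        rw [hfdef]
        simp only [dif_pos hzU]
        rw [hzr]
      · rw [(hGspec (r ⟨xm, hxmU⟩)).1 z hzD]
        by_cases hzU : z ∈ U
        · have hlt : r ⟨z, hzU⟩ < r ⟨xm, hxmU⟩ := by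
            rcases lt_or_eq_of_le (hmax' z ⟨hze, hzU⟩) with h | h
            · exact h
            · exact absurd ⟨hzU, h⟩ hzD
          rw [hgA, hfdef]
          simp only [dif_pos hzU, dif_pos hlt]
        · rw [hgA, hfdef]
          simp only [dif_neg hzU]
    refine (hGspec (r ⟨xm, hxmU⟩)).2 e he ?_ ⟨xm, hxme, hxmU, rfl⟩ ⟨c, fun z hz => ?_⟩
    · intro z hze
      rcases hesub hze with hzU | hzP
      · rcases lt_or_eq_of_le (hmax' z ⟨hze, hzU⟩) with h | h
        · exact Or.inr (Or.inr ⟨hzU, h⟩)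
        · exact Or.inl ⟨hzU, h⟩
      · exact Or.inr (Or.inl hzP)
    · rw [htrans z hz]
      exact hmono z hz

end Crec

section Extraction

variable {V : Type u}

lemma countable_of_injOn {α β : Type u} {s : Set α} (f : α → β)
    (hinj : Set.InjOn f s) (himg : (f '' s).Countable) : s.Countable := by
  obtain ⟨ι, hι⟩ := Set.countable_iff_exists_injective.mp himg
  rw [Set.countable_iff_exists_injective]
  refine ⟨fun x => ι ⟨f x.1, ⟨x.1, x.2, rfl⟩⟩, ?_⟩
  intro x y h
  have h2 := hι h
  have h3 : f x.1 = f y.1 := congrArg Subtype.val h2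
  exact Subtype.ext (hinj x.2 y.2 h3)

theorem extraction (𝒜 : Set (Set V)) (k m : ℕ) (hk : 2 ≤ k) (hm : 2 ≤ m)
    (huni : ∀ e ∈ 𝒜, e.ncard = k)
    (hker : ∀ S : Set V, 2 ≤ S.ncard → ∀ I : Set (Set V), I ⊆ 𝒜 →
      (∀ e ∈ I, ∀ e' ∈ I, e ≠ e' → e ∩ e' = S) → I.Countable)
    (w : Fin m → V) (hw : Function.Injective w)
    (hbig : ¬ (XFan 𝒜 m w).Countable) :
    ∃ (v : Fin m → V) (F : Fin m → Fin m → Set V),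
      Function.Injective v ∧
      (∀ t i, F t i ∈ 𝒜) ∧
      (∀ t i, v t ∈ F t i) ∧
      (∀ t i, w i ∈ F t i) ∧
      (∀ t i, v t ≠ w i) ∧
      (∀ t, ∀ i j, i ≠ j → F t i ∩ F t j = {v t}) ∧
      (∀ i, ∀ t s, t ≠ s → F t i ∩ F s i = {w i}) ∧
      (∀ t s i j, t ≠ s → i ≠ j → F t i ∩ F s j = (∅ : Set V)) ∧
      (∀ t i j, w i ∈ F t j → i = j) ∧
      (∀ t s i, v t ∈ F s i → t = s) := by
  classical
  haveI hFm : Nonempty (Fin m) := ⟨⟨0, by omega⟩⟩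
  haveI : Nonempty V := ⟨w ⟨0, by omega⟩⟩
  have hfin : ∀ e ∈ 𝒜, e.Finite := by
    intro e he
    by_contra hinf
    have h1 := Set.Infinite.ncard hinf
    rw [huni e he] at h1
    omega
  have hfan : ∀ v ∈ XFan 𝒜 m w, ∃ Ef : Fin m → Set V,
      (∀ i, Ef i ∈ 𝒜 ∧ v ∈ Ef i ∧ w i ∈ Ef i) ∧ ∀ i j, i ≠ j → Ef i ∩ Ef j = {v} :=
    fun v hv => hv.2
  choose! Efan hfan1 hfan2 using hfan
  set edgeFin : V → Fin m → Finset V := fun v i =>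
    if h : (Efan v i).Finite then h.toFinset else ∅ with hedgeFinDef
  have hedgeFin : ∀ v ∈ XFan 𝒜 m w, ∀ i, (edgeFin v i : Set V) = Efan v i := by
    intro v hv i
    have hf := hfin _ (hfan1 v hv i).1
    simp [hedgeFinDef, dif_pos hf, Set.Finite.coe_toFinset]
  have hedgecard : ∀ v ∈ XFan 𝒜 m w, ∀ i, (edgeFin v i).card = k := by
    intro v hv i
    have h1 : ((edgeFin v i : Set V)).ncard = (edgeFin v i).card := Set.ncard_coe_finset _
    rw [hedgeFin v hv i] at h1
    rw [← h1, huni _ (hfan1 v hv i).1]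
  -- Step B : refine each slot to an exact sunflower
  have hrefine : ∀ n : ℕ, n ≤ m → ∃ Z' : Set V, Z' ⊆ XFan 𝒜 m w ∧ ¬ Z'.Countable ∧
      ∀ i : Fin m, (i : ℕ) < n → ∀ u ∈ Z', ∀ v ∈ Z', u ≠ v →
        Efan u i ∩ Efan v i = {w i} := by
    intro n
    induction n with
    | zero => exact fun _ => ⟨XFan 𝒜 m w, subset_rfl, hbig, fun i hi => absurd hi (by omega)⟩
    | succ n ihn =>
      intro hn1
      obtain ⟨Z1, hZ1sub, hZ1unc, hZ1slots⟩ := ihn (by omega)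
      set i0 : Fin m := ⟨n, by omega⟩ with hi0
      have hfib : ∀ e : Set V, {v | v ∈ Z1 ∧ (fun v => Efan v i0) v = e}.Countable := by
        intro e
        by_cases hne : {v | v ∈ Z1 ∧ (fun v => Efan v i0) v = e}.Nonempty
        · obtain ⟨v0, hv0Z, hv0e⟩ := hne
          have hsub : {v | v ∈ Z1 ∧ (fun v => Efan v i0) v = e} ⊆ e := by
            rintro v ⟨hvZ, rfl⟩
            exact (hfan1 v (hZ1sub hvZ) i0).2.1
          have hef : e.Finite := by
            rw [← hv0e]
            exact hfin _ (hfan1 v0 (hZ1sub hv0Z) i0).1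
          exact (hef.subset hsub).countable
        · rw [Set.not_nonempty_iff_eq_empty] at hne
          rw [hne]
          exact Set.countable_empty
      have himg : ¬ ((fun v => Efan v i0) '' Z1).Countable :=
        uncountable_of_infinite_fibers _ hZ1unc hfib
      have hsec : ∀ e ∈ (fun v => Efan v i0) '' Z1, ∃ v, v ∈ Z1 ∧ Efan v i0 = e :=
        fun e he => he
      choose! sec hsecZ hsecE using hsec
      set T : Set V := sec '' ((fun v => Efan v i0) '' Z1) with hT
      have hTsub : T ⊆ Z1 := by
        rintro x ⟨e, he, rfl⟩
        exact hsecZ e he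
      have hTinj : Set.InjOn (fun v => Efan v i0) T := by
        rintro x ⟨e, he, rfl⟩ y ⟨e', he', rfl⟩ hxy
        simp only at hxy
        rw [hsecE e he, hsecE e' he'] at hxy
        rw [hxy]
      have hTunc : ¬ T.Countable := by
        intro hTc
        apply himg
        refine ((hTc.image (fun v => Efan v i0)).mono ?_)
        rintro e ⟨v, hv, rfl⟩
        exact ⟨sec ((fun v => Efan v i0) v),
          Set.mem_image_of_mem _ ⟨v, hv, rfl⟩, hsecE _ ⟨v, hv, rfl⟩⟩
      obtain ⟨J, K, hJT, hJunc, hJdelta⟩ := delta_system k T (fun v => edgeFin v i0) hTunc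
        (fun v hv => le_of_eq (hedgecard v (hZ1sub (hTsub hv)) i0))
      have hJZ : J ⊆ XFan 𝒜 m w := fun x hx => hZ1sub (hTsub (hJT hx))
      have hJdeltaSet : ∀ u ∈ J, ∀ v ∈ J, u ≠ v → Efan u i0 ∩ Efan v i0 = (K : Set V) := by
        intro u hu v hv huv
        rw [← hedgeFin u (hJZ hu) i0, ← hedgeFin v (hJZ hv) i0, ← Finset.coe_inter,
          hJdelta u hu v hv huv]
      have hJinf : J.Infinite := fun hfin2 => hJunc hfin2.countable
      obtain ⟨u1, hu1, u2, hu2, hu12⟩ := hJinf.nontrivial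
      have hwK : w i0 ∈ (K : Set V) := by
        rw [← hJdeltaSet u1 hu1 u2 hu2 hu12]
        exact ⟨(hfan1 u1 (hJZ hu1) i0).2.2, (hfan1 u2 (hJZ hu2) i0).2.2⟩
      have hKcard : K.card ≤ 1 := by
        by_contra hK2
        push_neg at hK2
        have hkerK := hker (↑K : Set V) (by rw [Set.ncard_coe_finset]; omega)
          ((fun v => Efan v i0) '' J)
          (by rintro e ⟨v, hv, rfl⟩; exact (hfan1 v (hJZ hv) i0).1)
          (by
            rintro e ⟨v1, hv1, rfl⟩ e' ⟨v2, hv2, rfl⟩ hne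
            have hv12 : v1 ≠ v2 := fun h => hne (by rw [h])
            exact hJdeltaSet v1 hv1 v2 hv2 hv12)
        exact hJunc (countable_of_injOn _ (hTinj.mono hJT) hkerK)
      have hKsing : (K : Set V) = {w i0} := by
        have : ∀ x ∈ (K : Set V), x = w i0 :=
          fun x hx => Finset.card_le_one.mp hKcard x hx (w i0) hwK
        ext x
        simp only [Set.mem_singleton_iff]
        exact ⟨this x, fun h => h ▸ hwK⟩
      refine ⟨J, hJZ, hJunc, ?_⟩
      intro i hi u hu v hv huv
      rcases Nat.lt_or_ge (i : ℕ) n with h2 | h2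
      · exact hZ1slots i h2 u (hTsub (hJT hu)) v (hTsub (hJT hv)) huv
      · have hival : (i0 : ℕ) = n := rfl
        have : i = i0 := Fin.ext (by omega)
        rw [this]
        rw [hJdeltaSet u hu v hv huv, hKsing]
  obtain ⟨Y, hYsub, hYunc, hYslots⟩ := hrefine m le_rfl
  have hYslot : ∀ (i : Fin m), ∀ u ∈ Y, ∀ v ∈ Y, u ≠ v → Efan u i ∩ Efan v i = {w i} :=
    fun i u hu v hv huv => hYslots i i.isLt u hu v hv huv
  -- Step C : Δ-system on supports
  set supF : V → Finset V := fun v => Finset.univ.biUnion (fun i => edgeFin v i) with hsupF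
  have hsupmem : ∀ v ∈ XFan 𝒜 m w, ∀ (i : Fin m) z, z ∈ Efan v i → z ∈ (supF v : Set V) := by
    intro v hv i z hz
    rw [hsupF]
    simp only [Finset.coe_biUnion, Finset.mem_coe, Finset.mem_univ, Set.mem_iUnion,
      Set.iUnion_true]
    exact ⟨i, by rw [← Finset.mem_coe, hedgeFin v hv i]; exact hz⟩
  have hsupmem' : ∀ v ∈ XFan 𝒜 m w, ∀ z, z ∈ (supF v : Set V) → ∃ i, z ∈ Efan v i := by
    intro v hv z hz
    rw [hsupF] at hz
    simp only [Finset.coe_biUnion, Finset.mem_coe, Finset.mem_univ, Set.mem_iUnion,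
      Set.iUnion_true] at hz
    obtain ⟨i, hi⟩ := hz
    exact ⟨i, by rw [← hedgeFin v hv i]; exact hi⟩
  have hsupcard : ∀ v ∈ Y, (supF v).card ≤ m * k := by
    intro v hv
    refine le_trans Finset.card_biUnion_le ?_
    have h1 : ∀ i : Fin m, (edgeFin v i).card = k := hedgecard v (hYsub hv)
    have h2 : (∑ i : Fin m, (edgeFin v i).card) = m * k := by
      rw [Finset.sum_congr rfl (fun i _ => h1 i)]
      simp [Finset.sum_const, Finset.card_univ, smul_eq_mul]
    exact le_of_eq h2
  obtain ⟨J2, R, hJ2Y, hJ2unc, hJ2delta⟩ := delta_system (m * k) Y supF hYunc hsupcard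
  set J3 : Set V := J2 \ (↑R : Set V) with hJ3
  have hJ3unc : ¬ J3.Countable := by
    intro hc
    apply hJ2unc
    refine ((hc.union (R : Set V).to_countable ).mono ?_)
    intro x hx
    by_cases hxR : x ∈ (↑R : Set V)
    · exact Or.inr hxR
    · exact Or.inl ⟨hx, hxR⟩
  have hJ3Y : J3 ⊆ Y := fun x hx => hJ2Y hx.1
  have hJ3sub : J3 ⊆ XFan 𝒜 m w := fun x hx => hYsub (hJ3Y hx)
  have hJ3inf : J3.Infinite := fun h => hJ3unc h.countable
  have hRsup : ∀ v ∈ J3, (↑R : Set V) ⊆ (supF v : Set V) := by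
    intro v hv y hy
    obtain ⟨a, ha, b, hb, hab⟩ := hJ3inf.nontrivial
    obtain ⟨u, hu, hne⟩ : ∃ u ∈ J3, u ≠ v := by
      rcases eq_or_ne a v with rfl | h
      · exact ⟨b, hb, fun hq => hab hq.symm⟩
      · exact ⟨a, ha, h⟩
    have h7 := hJ2delta v hv.1 u hu.1 (fun hq => hne hq.symm)
    have h8 : y ∈ supF v ∩ supF u := by
      rw [h7]
      exact_mod_cast hy
    exact Finset.mem_coe.mpr (Finset.mem_inter.mp h8).1
  have hRw : (↑R : Set V) ⊆ Set.range w := by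
    intro y hyR
    by_contra hyw
    have hysup : ∀ v, v ∈ J3 → ∃ i : Fin m, y ∈ Efan v i := by
      intro v hv
      exact hsupmem' v (hJ3sub hv) y (hRsup v hv hyR)
    choose! fsel hfsel using hysup
    obtain ⟨i, hifib⟩ := uncountable_fiber (s := J3) hJ3unc fsel
    have hnontriv : {a | a ∈ J3 ∧ fsel a = i}.Infinite := fun h => hifib h.countable
    obtain ⟨a, ha, b, hb, hab⟩ := hnontriv.nontrivial
    have h8 := hYslot i a (hJ3Y ha.1) b (hJ3Y hb.1) hab
    have h9 : y ∈ Efan a i ∩ Efan b i := by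
      constructor
      · rw [← ha.2]; exact hfsel a ha.1
      · rw [← hb.2]; exact hfsel b hb.1
    rw [h8] at h9
    exact hyw ⟨i, h9.symm⟩
  -- trace ban
  set B : Set V := {v | v ∈ J3 ∧ ∃ i j : Fin m, i ≠ j ∧ w j ∈ Efan v i} with hB
  have hBc : B.Countable := by
    have hsub : B ⊆ ⋃ (i : Fin m) (j : Fin m), {v | v ∈ J3 ∧ i ≠ j ∧ w j ∈ Efan v i} := by
      rintro v ⟨hvJ, i, j, hij, hwv⟩
      exact Set.mem_iUnion.mpr ⟨i, Set.mem_iUnion.mpr ⟨j, hvJ, hij, hwv⟩⟩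
    refine ((Set.countable_iUnion fun i => Set.countable_iUnion fun j => ?_).mono hsub)
    refine Set.Subsingleton.countable ?_
    rintro u ⟨huJ, hij, hwu⟩ v ⟨hvJ, _, hwv⟩
    by_contra huv
    have h10 := hYslot i u (hJ3Y huJ) v (hJ3Y hvJ) huv
    have h11 : w j ∈ ({w i} : Set V) := by
      rw [← h10]
      exact ⟨hwu, hwv⟩
    exact hij (hw (Set.mem_singleton_iff.mp h11)).symm
  set J4 : Set V := J3 \ B with hJ4
  have hJ4unc : ¬ J4.Countable := by
    intro hc
    apply hJ3unc
    refine ((hc.union hBc).mono ?_)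
    intro x hx
    by_cases hxB : x ∈ B
    · exact Or.inr hxB
    · exact Or.inl ⟨hx, hxB⟩
  have hJ4inf : J4.Infinite := fun h => hJ4unc h.countable
  -- pick m distinct elements
  set emb := Set.Infinite.natEmbedding J4 hJ4inf with hemb
  set v : Fin m → V := fun t => ↑(emb t.val) with hv
  have hvJ4 : ∀ t, v t ∈ J4 := fun t => (emb t.val).2
  have hvZ : ∀ t, v t ∈ XFan 𝒜 m w := fun t => hJ3sub (hvJ4 t).1
  have hvinj : Function.Injective v := by
    intro t s h
    have := emb.injective (Subtype.ext h)
    exact Fin.ext this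
  have hvnw : ∀ t i, v t ≠ w i := fun t i => (hvZ t).1 i
  refine ⟨v, fun t i => Efan (v t) i, hvinj, ?_, ?_, ?_, hvnw, ?_, ?_, ?_, ?_, ?_⟩
  · exact fun t i => (hfan1 (v t) (hvZ t) i).1
  · exact fun t i => (hfan1 (v t) (hvZ t) i).2.1
  · exact fun t i => (hfan1 (v t) (hvZ t) i).2.2
  · exact fun t i j hij => hfan2 (v t) (hvZ t) i j hij
  · intro i t s hts
    exact hYslot i (v t) (hJ3Y (hvJ4 t).1) (v s) (hJ3Y (hvJ4 s).1)
      (fun h => hts (hvinj h))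
  · intro t s i j hts hij
    ext z
    simp only [Set.mem_inter_iff, Set.mem_empty_iff_false, iff_false, not_and]
    intro hzi hzj
    have hvts : v t ≠ v s := fun h => hts (hvinj h)
    have hzsupt : z ∈ (supF (v t) : Set V) := hsupmem (v t) (hvZ t) i z hzi
    have hzsups : z ∈ (supF (v s) : Set V) := hsupmem (v s) (hvZ s) j z hzj
    have h12 := hJ2delta (v t) (hvJ4 t).1.1 (v s) (hvJ4 s).1.1 hvts
    have hzR : z ∈ (↑R : Set V) := by
      rw [← h12, Finset.coe_inter]
      exact ⟨hzsupt, hzsups⟩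
    obtain ⟨a, rfl⟩ := hRw hzR
    have hai : a = i := by
      by_contra hai
      exact (hvJ4 t).2 ⟨(hvJ4 t).1, i, a, fun h => hai h.symm, hzi⟩
    have haj : a = j := by
      by_contra haj
      exact (hvJ4 s).2 ⟨(hvJ4 s).1, j, a, fun h => haj h.symm, hzj⟩
    rw [← hai, ← haj] at hij
    exact hij rfl
  · intro t i j hwij
    by_contra hij
    exact (hvJ4 t).2 ⟨(hvJ4 t).1, j, i, fun h => hij h.symm, hwij⟩
  · intro t s i hvtsi
    by_contra hts
    have hvts2 : v t ≠ v s := fun h => hts (hvinj h)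
    have h13 := hJ2delta (v t) (hvJ4 t).1.1 (v s) (hvJ4 s).1.1 hvts2
    have h14 : v t ∈ (↑R : Set V) := by
      rw [← h13, Finset.coe_inter]
      exact ⟨hsupmem (v t) (hvZ t) i (v t) ((hfan1 (v t) (hvZ t) i).2.1),
             hsupmem (v s) (hvZ s) i (v t) hvtsi⟩
    obtain ⟨a, ha⟩ := hRw h14
    exact hvnw t a ha.symm

end Extraction

section Assemble

variable {V : Type u}

theorem assemble (m l : ℕ) (hm : 2 ≤ m) (hl : l = 2 * m)
    (E : Set (Set V)) (w v : Fin m → V) (F : Fin m → Fin m → Set V)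
    (hFE : ∀ t i, F t i ∈ E)
    (hwi : Function.Injective w) (hvi : Function.Injective v)
    (hvw : ∀ t i, v t ≠ w i)
    (hvF : ∀ t i, v t ∈ F t i) (hwF : ∀ t i, w i ∈ F t i)
    (hP2 : ∀ t, ∀ i j, i ≠ j → F t i ∩ F t j = {v t})
    (hP3 : ∀ i, ∀ t s, t ≠ s → F t i ∩ F s i = {w i})
    (hP4 : ∀ t s i j, t ≠ s → i ≠ j → F t i ∩ F s j = (∅ : Set V)) :
    ∃ (x : ZMod l → V) (e : ZMod l → Set V),
      Function.Injective x ∧ (∀ i, e i ∈ E) ∧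
      (∀ i, x i ∈ e i ∧ x (i + 1) ∈ e i) ∧
      ∀ i j, i ≠ j → e i ∩ e j = ({x i, x (i + 1)} : Set V) ∩ {x j, x (j + 1)} := by
  classical
  haveI : NeZero l := ⟨by omega⟩
  haveI : Fact (1 < l) := ⟨by omega⟩
  have hlt : ∀ z : ZMod l, z.val < l := fun z => ZMod.val_lt z
  have ht : ∀ z : ZMod l, z.val / 2 < m := by
    intro z
    have := hlt z
    omega
  set anext : Fin m → Fin m := fun a => ⟨((a : ℕ) + 1) % m, Nat.mod_lt _ (by omega)⟩
    with hanextdef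
  have hanextval : ∀ a : Fin m, ((a : ℕ) + 1 < m ∧ (anext a : ℕ) = (a : ℕ) + 1) ∨
      ((a : ℕ) + 1 = m ∧ (anext a : ℕ) = 0) := by
    intro a
    have ha := a.isLt
    by_cases h : (a : ℕ) + 1 < m
    · left
      exact ⟨h, by simp [hanextdef, Nat.mod_eq_of_lt h]⟩
    · right
      have h2 : (a : ℕ) + 1 = m := by omega
      refine ⟨h2, ?_⟩
      simp [hanextdef, h2, Nat.mod_self]
  have hanext_ne : ∀ a, anext a ≠ a := by
    intro a h
    have h2 := congrArg Fin.val h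
    have ha := a.isLt
    rcases hanextval a with ⟨h3, h4⟩ | ⟨h3, h4⟩ <;> omega
  have hanext_inj : Function.Injective anext := by
    intro a b h
    have h2 := congrArg Fin.val h
    have ha := a.isLt
    have hb := b.isLt
    apply Fin.ext
    rcases hanextval a with ⟨h3, h4⟩ | ⟨h3, h4⟩ <;>
      rcases hanextval b with ⟨h5, h6⟩ | ⟨h5, h6⟩ <;> omega
  set x : ZMod l → V := fun z =>
    if z.val % 2 = 0 then w ⟨z.val / 2, ht z⟩ else v ⟨z.val / 2, ht z⟩ with hx
  set e : ZMod l → Set V := fun z =>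
    if z.val % 2 = 0 then F ⟨z.val / 2, ht z⟩ ⟨z.val / 2, ht z⟩
    else F ⟨z.val / 2, ht z⟩ (anext ⟨z.val / 2, ht z⟩) with he
  have hsucc : ∀ z : ZMod l, (z + 1).val = (z.val + 1) % l := by
    intro z
    rw [ZMod.val_add, ZMod.val_one]
  have hstep : ∀ z : ZMod l,
      (∃ a : Fin m, z.val = 2 * (a : ℕ) ∧ x z = w a ∧ x (z + 1) = v a ∧ e z = F a a) ∨
      (∃ a : Fin m, z.val = 2 * (a : ℕ) + 1 ∧ x z = v a ∧ x (z + 1) = w (anext a) ∧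
        e z = F a (anext a)) := by
    intro z
    have hzl := hlt z
    by_cases hpar : z.val % 2 = 0
    · left
      refine ⟨⟨z.val / 2, ht z⟩, by simp; omega, by rw [hx]; simp [hpar], ?_, by rw [he]; simp [hpar]⟩
      have h1 : (z + 1).val = z.val + 1 := by
        rw [hsucc z, Nat.mod_eq_of_lt (by omega)]
      rw [hx]
      simp only [h1]
      have h2 : ¬ ((z.val + 1) % 2 = 0) := by omega
      rw [if_neg h2]
      congr 1
      apply Fin.ext
      show (z.val + 1) / 2 = z.val / 2
      omega
    · right
      refine ⟨⟨z.val / 2, ht z⟩, by simp; omega, by rw [hx]; simp [hpar], ?_, by rw [he]; simp [hpar]⟩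
      rcases Nat.lt_or_ge (z.val + 1) l with hc | hc
      · have h1 : (z + 1).val = z.val + 1 := by rw [hsucc z, Nat.mod_eq_of_lt hc]
        rw [hx]
        simp only [h1]
        have h2 : (z.val + 1) % 2 = 0 := by omega
        rw [if_pos h2]
        congr 1
        apply Fin.ext
        show (z.val + 1) / 2 = (anext ⟨z.val / 2, ht z⟩ : ℕ)
        have hodd : z.val % 2 = 1 := by omega
        rcases hanextval ⟨z.val / 2, ht z⟩ with ⟨h3, h4⟩ | ⟨h3, h4⟩ <;>
          simp only [hanextdef, Fin.val_mk] at h3 h4 ⊢ <;> omega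
      · have hzv : z.val = l - 1 := by omega
        have h1 : (z + 1).val = 0 := by
          rw [hsucc z]
          have : z.val + 1 = l := by omega
          rw [this, Nat.mod_self]
        rw [hx]
        simp only [h1]
        rw [if_pos (by norm_num)]
        congr 1
        apply Fin.ext
        show (0 : ℕ) / 2 = (anext ⟨z.val / 2, ht z⟩ : ℕ)
        have hodd : z.val % 2 = 1 := by omega
        rcases hanextval ⟨z.val / 2, ht z⟩ with ⟨h3, h4⟩ | ⟨h3, h4⟩ <;>
          simp only [hanextdef, Fin.val_mk] at h3 h4 ⊢ <;> omega
  have hvalinj : ∀ i j : ZMod l, i.val = j.val → i = j := by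
    intro i j h
    exact ZMod.val_injective l h
  -- pair-set helpers
  have hpairgen : ∀ (p q : V) (s : Set V), p ∉ s → q ∈ s → ({p, q} : Set V) ∩ s = {q} := by
    intro p q s hp hq
    ext z
    simp only [Set.mem_inter_iff, Set.mem_insert_iff, Set.mem_singleton_iff]
    constructor
    · rintro ⟨h1 | h1, h2⟩
      · subst h1; exact absurd h2 hp
      · exact h1
    · rintro rfl
      exact ⟨Or.inr rfl, hq⟩
  have hpairgen' : ∀ (p q : V) (s : Set V), p ∈ s → q ∉ s → ({p, q} : Set V) ∩ s = {p} := by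
    intro p q s hp hq
    ext z
    simp only [Set.mem_inter_iff, Set.mem_insert_iff, Set.mem_singleton_iff]
    constructor
    · rintro ⟨h1 | h1, h2⟩
      · exact h1
      · subst h1; exact absurd h2 hq
    · rintro rfl
      exact ⟨Or.inl rfl, hp⟩
  have hpairempty : ∀ (p q : V) (s : Set V), p ∉ s → q ∉ s → ({p, q} : Set V) ∩ s = ∅ := by
    intro p q s hp hq
    ext z
    simp only [Set.mem_inter_iff, Set.mem_insert_iff, Set.mem_singleton_iff,
      Set.mem_empty_iff_false, iff_false, not_and]
    rintro (h1 | h1) h2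
    · subst h1; exact hp h2
    · subst h1; exact hq h2
  have hmemtwo : ∀ (p q r : V), p = q ∨ p = r → p ∈ ({q, r} : Set V) := by
    intro p q r h
    rcases h with rfl | rfl
    · exact Or.inl rfl
    · exact Or.inr rfl
  have hnottwo : ∀ (p q r : V), p ≠ q → p ≠ r → p ∉ ({q, r} : Set V) := by
    intro p q r h1 h2 h
    rcases h with h | h
    · exact h1 h
    · exact h2 h
  -- the three case computations
  have hEE : ∀ i j : ZMod l, i ≠ j →
      ∀ a b : Fin m, (i.val = 2 * (a : ℕ) ∧ x i = w a ∧ x (i+1) = v a ∧ e i = F a a) →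
        (j.val = 2 * (b : ℕ) ∧ x j = w b ∧ x (j+1) = v b ∧ e j = F b b) →
      e i ∩ e j = ({x i, x (i + 1)} : Set V) ∩ {x j, x (j + 1)} := by
    rintro i j hij a b ⟨hva, hxa, hxa1, hea⟩ ⟨hvb, hxb, hxb1, heb⟩
    have hab : a ≠ b := by
      intro h
      subst h
      exact hij (hvalinj _ _ (by omega))
    rw [hea, heb, hxa, hxa1, hxb, hxb1]
    rw [hP4 a b a b hab hab]
    rw [hpairempty _ _ _ (hnottwo _ _ _ (fun h => hab (hwi h)) (fun h => hvw b (a) h.symm))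
      (hnottwo _ _ _ (hvw a b) (fun h => hab (hvi h)))]
  have hOO : ∀ i j : ZMod l, i ≠ j →
      ∀ a b : Fin m, (i.val = 2 * (a : ℕ) + 1 ∧ x i = v a ∧ x (i+1) = w (anext a) ∧
          e i = F a (anext a)) →
        (j.val = 2 * (b : ℕ) + 1 ∧ x j = v b ∧ x (j+1) = w (anext b) ∧ e j = F b (anext b)) →
      e i ∩ e j = ({x i, x (i + 1)} : Set V) ∩ {x j, x (j + 1)} := by
    rintro i j hij a b ⟨hva, hxa, hxa1, hea⟩ ⟨hvb, hxb, hxb1, heb⟩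
    have hab : a ≠ b := by
      intro h
      subst h
      exact hij (hvalinj _ _ (by omega))
    rw [hea, heb, hxa, hxa1, hxb, hxb1]
    rw [hP4 a b (anext a) (anext b) hab (fun h => hab (hanext_inj h))]
    rw [hpairempty _ _ _ (hnottwo _ _ _ (fun h => hab (hvi h)) (hvw a (anext b)))
      (hnottwo _ _ _ (fun h => hvw b (anext a) h.symm)
        (fun h => hab (hanext_inj (hwi h))))]
  have hEO : ∀ i j : ZMod l, i ≠ j →
      ∀ a b : Fin m, (i.val = 2 * (a : ℕ) ∧ x i = w a ∧ x (i+1) = v a ∧ e i = F a a) →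
        (j.val = 2 * (b : ℕ) + 1 ∧ x j = v b ∧ x (j+1) = w (anext b) ∧ e j = F b (anext b)) →
      e i ∩ e j = ({x i, x (i + 1)} : Set V) ∩ {x j, x (j + 1)} := by
    rintro i j hij a b ⟨hva, hxa, hxa1, hea⟩ ⟨hvb, hxb, hxb1, heb⟩
    rw [hea, heb, hxa, hxa1, hxb, hxb1]
    by_cases hba : b = a
    · subst hba
      rw [hP2 b b (anext b) (fun h => hanext_ne b h.symm)]
      rw [hpairgen _ _ _ (hnottwo _ _ _ (fun h => hvw b b h.symm)
        (fun h => hanext_ne b (hwi h).symm)) (hmemtwo _ _ _ (Or.inl rfl))]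
    · by_cases hnba : anext b = a
      · rw [hnba]
        have hab' : a ≠ b := fun h => hba h.symm
        rw [hP3 a a b hab']
        rw [hpairgen' _ _ _ (hmemtwo _ _ _ (Or.inr rfl))
          (hnottwo _ _ _ (fun h => hba (hvi h).symm) (hvw a a))]
      · rw [hP4 a b a (anext b) (fun h => hba h.symm) (fun h => hnba h.symm)]
        rw [hpairempty _ _ _
          (hnottwo _ _ _ (fun h => hvw b a h.symm) (fun h => hnba (hwi h).symm))
          (hnottwo _ _ _ (fun h => hba (hvi h).symm) (hvw a (anext b)))]
  have hmain : ∀ i j : ZMod l, i ≠ j →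
      e i ∩ e j = ({x i, x (i + 1)} : Set V) ∩ {x j, x (j + 1)} := by
    intro i j hij
    rcases hstep i with hi | hi <;> rcases hstep j with hj | hj
    · obtain ⟨a, ha⟩ := hi; obtain ⟨b, hb⟩ := hj; exact hEE i j hij a b ha hb
    · obtain ⟨a, ha⟩ := hi; obtain ⟨b, hb⟩ := hj; exact hEO i j hij a b ha hb
    · obtain ⟨a, ha⟩ := hi
      obtain ⟨b, hb⟩ := hj
      have h2 := hEO j i (Ne.symm hij) b a hb ha
      rw [Set.inter_comm (e j) (e i)] at h2
      rw [h2, Set.inter_comm]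
    · obtain ⟨a, ha⟩ := hi; obtain ⟨b, hb⟩ := hj; exact hOO i j hij a b ha hb
  have hxinj : Function.Injective x := by
    intro i j hxy
    by_contra hne
    rcases hstep i with ⟨a, hai, hxi, _, _⟩ | ⟨a, hai, hxi, _, _⟩ <;>
      rcases hstep j with ⟨b, hbj, hxj, _, _⟩ | ⟨b, hbj, hxj, _, _⟩
    · rw [hxi, hxj] at hxy
      have h3 := hwi hxy
      subst h3
      exact hne (hvalinj _ _ (by omega))
    · rw [hxi, hxj] at hxy
      exact hvw b a hxy.symm
    · rw [hxi, hxj] at hxy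
      exact hvw a b hxy
    · rw [hxi, hxj] at hxy
      have h3 := hvi hxy
      subst h3
      exact hne (hvalinj _ _ (by omega))
  refine ⟨x, e, hxinj, ?_, ?_, hmain⟩
  · intro i
    rcases hstep i with ⟨a, _, _, _, hei⟩ | ⟨a, _, _, _, hei⟩ <;> rw [hei]
    · exact hFE a a
    · exact hFE a (anext a)
  · intro i
    rcases hstep i with ⟨a, _, hxi, hxi1, hei⟩ | ⟨a, _, hxi, hxi1, hei⟩ <;>
      rw [hxi, hxi1, hei]
    · exact ⟨hwF a a, hvF a a⟩
    · exact ⟨hvF a (anext a), hwF a (anext a)⟩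

end Assemble

section Main

variable {V : Type u}

/-- local copy of the expansion-containment predicate -/
def CEC (l : ℕ) {V : Type u} (E : Set (Set V)) : Prop :=
  ∃ (x : ZMod l → V) (e : ZMod l → Set V),
    Function.Injective x ∧ (∀ i, e i ∈ E) ∧
    (∀ i, x i ∈ e i ∧ x (i + 1) ∈ e i) ∧
    ∀ i j, i ≠ j → e i ∩ e j = ({x i, x (i + 1)} : Set V) ∩ {x j, x (j + 1)}

def ColorableN {V : Type u} (𝒜 : Set (Set V)) : Prop :=
  ∃ f : V → ℕ, ∀ e ∈ 𝒜, ∃ a ∈ e, ∃ b ∈ e, f a ≠ f b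

theorem lift_expansion (l : ℕ) (hl : 0 < l) (E K : Set (Set V))
    (hfinE : ∀ e ∈ E, e.Finite)
    (hSfin : ∀ S ∈ K, S.Finite)
    (hlift : ∀ S ∈ K, ∃ I : Set (Set V), I ⊆ E ∧ ¬ I.Countable ∧
      (∀ e ∈ I, S ⊆ e) ∧ ∀ e ∈ I, ∀ e' ∈ I, e ≠ e' → e ∩ e' = S)
    (hK : CEC l K) : CEC l E := by
  classical
  haveI : NeZero l := ⟨by omega⟩
  obtain ⟨x, S, hxinj, hSK, hxS, hSint⟩ := hK
  have hchoose : ∀ n : ℕ, n ≤ l → ∃ T : ZMod l → Set V,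
      ∀ i : ZMod l, i.val < n → (T i ∈ E ∧ S i ⊆ T i ∧
        ((T i \ S i) ∩ (⋃ j, S j)) = ∅ ∧
        ∀ j : ZMod l, j.val < i.val → (T i \ S i) ∩ T j = ∅) := by
    intro n
    induction n with
    | zero => exact fun _ => ⟨fun _ => ∅, fun i hi => absurd hi (Nat.not_lt_zero _)⟩
    | succ n ihn =>
      intro hn
      obtain ⟨T, hT⟩ := ihn (by omega)
      set i0 : ZMod l := (n : ZMod l) with hi0
      have hi0val : i0.val = n := ZMod.val_cast_of_lt (by omega)
      obtain ⟨I, hIE, hIunc, hIsup, hIint⟩ := hlift (S i0) (hSK i0)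
      set FORB : Set V := ((⋃ j, S j) ∪ (⋃ j ∈ {j : ZMod l | j.val < n}, T j)) \ S i0
        with hFORB
      have hFORBfin : FORB.Finite := by
        refine Set.Finite.diff (Set.Finite.union ?_ ?_)
        · exact Set.finite_iUnion (fun j => hSfin _ (hSK j))
        · refine Set.Finite.biUnion (Set.toFinite _) ?_
          intro j hj
          exact hfinE _ (hT j hj).1
      have hgood : ∃ e ∈ I, (e \ S i0) ∩ FORB = ∅ := by
        by_contra hno
        push_neg at hno
        haveI : Nonempty V := ⟨x 0⟩
        choose! pt hpt2 using hno
        have hptinj : Set.InjOn pt I := by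
          intro e he e' he' hpp
          by_contra hne
          have h1 := (hpt2 e he).1
          have h2 := (hpt2 e' he').1
          rw [hpp] at h1
          have h3 : pt e' ∈ e ∩ e' := ⟨h1.1, h2.1⟩
          rw [hIint e he e' he' hne] at h3
          exact h2.2 h3
        have hIfin : I.Finite := by
          refine Set.Finite.of_finite_image (hFORBfin.subset ?_) hptinj
          rintro _ ⟨e, he, rfl⟩
          exact (hpt2 e he).2
        exact hIunc hIfin.countable
      obtain ⟨e0, he0I, he0cl⟩ := hgood
      refine ⟨Function.update T i0 e0, ?_⟩
      intro i hi
      by_cases hii : i = i0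
      · subst hii
        rw [Function.update_self]
        refine ⟨hIE he0I, hIsup e0 he0I, ?_, ?_⟩
        · apply Set.eq_empty_iff_forall_notMem.mpr
          rintro z ⟨⟨hze, hzS⟩, hzU⟩
          have hzF : z ∈ FORB := ⟨Or.inl hzU, hzS⟩
          have h4 : z ∈ (e0 \ S i0) ∩ FORB := ⟨⟨hze, hzS⟩, hzF⟩
          rw [he0cl] at h4
          exact h4
        · intro j hj
          have hjn : j.val < n := by rw [← hi0val]; exact hj
          have hji0 : j ≠ i0 := by
            intro h
            rw [h, hi0val] at hjn
            omega
          rw [Function.update_of_ne hji0]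
          apply Set.eq_empty_iff_forall_notMem.mpr
          rintro z ⟨⟨hze, hzS⟩, hzT⟩
          have hzF : z ∈ FORB := ⟨Or.inr (Set.mem_biUnion hjn hzT), hzS⟩
          have h4 : z ∈ (e0 \ S i0) ∩ FORB := ⟨⟨hze, hzS⟩, hzF⟩
          rw [he0cl] at h4
          exact h4
      · rw [Function.update_of_ne hii]
        have hival : i.val < n := by
          rcases Nat.lt_or_ge i.val n with h | h
          · exact h
          · exfalso
            apply hii
            apply ZMod.val_injective
            rw [hi0val]
            omega
        obtain ⟨hTE, hTsup, hTglob, hTloc⟩ := hT i hival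
        refine ⟨hTE, hTsup, hTglob, ?_⟩
        intro j hj
        have hji0 : j ≠ i0 := by
          intro h
          rw [h, hi0val] at hj
          omega
        rw [Function.update_of_ne hji0]
        exact hTloc j hj
  obtain ⟨T, hT⟩ := hchoose l le_rfl
  have hTall : ∀ i : ZMod l, T i ∈ E ∧ S i ⊆ T i ∧
      ((T i \ S i) ∩ (⋃ j, S j)) = ∅ ∧
      ∀ j : ZMod l, j.val < i.val → (T i \ S i) ∩ T j = ∅ :=
    fun i => hT i (ZMod.val_lt i)
  have haux : ∀ i j : ZMod l, j.val < i.val → T i ∩ T j = S i ∩ S j := by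
    intro i j hji
    apply Set.Subset.antisymm
    · rintro z ⟨hzi, hzj⟩
      have hzSi : z ∈ S i := by
        by_contra h
        have h2 : z ∈ (T i \ S i) ∩ T j := ⟨⟨hzi, h⟩, hzj⟩
        rw [(hTall i).2.2.2 j hji] at h2
        exact h2
      have hzSj : z ∈ S j := by
        by_contra h
        have h2 : z ∈ (T j \ S j) ∩ (⋃ j', S j') := ⟨⟨hzj, h⟩, Set.mem_iUnion.mpr ⟨i, hzSi⟩⟩
        rw [(hTall j).2.2.1] at h2
        exact h2
      exact ⟨hzSi, hzSj⟩
    · exact Set.inter_subset_inter (hTall i).2.1 (hTall j).2.1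
  have hints : ∀ i j : ZMod l, i ≠ j → T i ∩ T j = S i ∩ S j := by
    intro i j hij
    rcases Nat.lt_or_ge j.val i.val with h | h
    · exact haux i j h
    · have h2 : i.val < j.val := by
        rcases Nat.lt_or_ge i.val j.val with h3 | h3
        · exact h3
        · exfalso
          exact hij (ZMod.val_injective l (by omega))
      rw [Set.inter_comm, haux j i h2, Set.inter_comm]
  refine ⟨x, T, hxinj, fun i => (hTall i).1,
    fun i => ⟨(hTall i).2.1 (hxS i).1, (hTall i).2.1 (hxS i).2⟩, ?_⟩
  intro i j hij
  rw [hints i j hij]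
  exact hSint i j hij

theorem main_internal (m l : ℕ) (hm : 2 ≤ m) (hl : l = 2 * m) :
    ∀ k : ℕ, 2 ≤ k → ∀ (V : Type u) (E : Set (Set V)),
      (∀ e ∈ E, e.ncard = k) → ¬ ColorableN E → CEC l E := by
  intro k
  induction k using Nat.strong_induction_on with
  | _ k IH =>
  intro hk V E huni hNC
  classical
  set 𝒦 : ℕ → Set (Set V) := fun j => {S | S.ncard = j ∧ ∃ I : Set (Set V), I ⊆ E ∧
    ¬ I.Countable ∧ ∀ e ∈ I, ∀ e' ∈ I, e ≠ e' → e ∩ e' = S} with h𝒦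
  have hfinE : ∀ e ∈ E, e.Finite := by
    intro e he
    by_contra hinf
    have h1 := Set.Infinite.ncard hinf
    rw [huni e he] at h1
    omega
  have hntE : ∀ e ∈ E, e.Nontrivial := by
    intro e he
    have h1 : 1 < e.ncard := by rw [huni e he]; omega
    rw [Set.one_lt_ncard_iff (hfinE e he)] at h1
    obtain ⟨a, b, ha, hb, hab⟩ := h1
    exact ⟨a, ha, b, hb, hab⟩
  by_cases hcase : ∃ j, 2 ≤ j ∧ j < k ∧ ¬ ColorableN (𝒦 j)
  · obtain ⟨j, hj2, hjk, hjNC⟩ := hcase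
    have hKuni : ∀ S ∈ 𝒦 j, S.ncard = j := fun S hS => hS.1
    have hKexp : CEC l (𝒦 j) := IH j hjk hj2 V (𝒦 j) hKuni hjNC
    have hSfin : ∀ S ∈ 𝒦 j, S.Finite := by
      intro S hS
      by_contra hinf
      have h1 := Set.Infinite.ncard hinf
      rw [hS.1] at h1
      omega
    refine lift_expansion l (by omega) E (𝒦 j) hfinE hSfin ?_ hKexp
    intro S hS
    obtain ⟨hcard, I, hIE, hIunc, hIint⟩ := hS
    refine ⟨I, hIE, hIunc, ?_, hIint⟩
    intro e he
    have hInt : I.Infinite := fun h => hIunc h.countable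
    obtain ⟨a, ha, b, hb, hab⟩ := hInt.nontrivial
    rcases eq_or_ne e a with rfl | hea
    · rw [← hIint e he b hb (fun h => hab (h ▸ rfl))]
      exact Set.inter_subset_left
    · rw [← hIint e he a ha hea]
      exact Set.inter_subset_left
  · push_neg at hcase
    set Ehat : Set (Set V) := {e | e ∈ E ∧ ∀ S : Set V, S ⊆ e → 2 ≤ S.ncard →
      S.ncard < k → S ∉ 𝒦 (S.ncard)} with hEhat
    have hEhatE : Ehat ⊆ E := fun e he => he.1
    have hgood : ∀ e ∈ Ehat, e.Finite ∧ e.Nontrivial :=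
      fun e he => ⟨hfinE e he.1, hntE e he.1⟩
    have hker : ∀ S : Set V, 2 ≤ S.ncard → ∀ I : Set (Set V), I ⊆ Ehat →
        (∀ e ∈ I, ∀ e' ∈ I, e ≠ e' → e ∩ e' = S) → I.Countable := by
      intro S hS2 I hIsub hIint
      by_contra hIunc
      have hInt : I.Infinite := fun h => hIunc h.countable
      obtain ⟨a, ha, b, hb, hab⟩ := hInt.nontrivial
      have hSa : S ⊆ a := by
        rw [← hIint a ha b hb hab]
        exact Set.inter_subset_left
      have hSsub : S ⊂ a := by
        refine ⟨hSa, ?_⟩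
        intro hasub
        have hSb : S ⊆ b := by
          rw [← hIint a ha b hb hab]
          exact Set.inter_subset_right
        have hab2 : a ⊆ b := fun z hz => hSb (hasub hz)
        have heq : a = b := Set.eq_of_subset_of_ncard_le hab2
          (le_of_eq (by rw [huni b (hIsub hb).1, huni a (hIsub ha).1]))
          (hfinE b (hIsub hb).1)
        exact hab heq
      have hcardlt : S.ncard < k := by
        have := Set.ncard_lt_ncard hSsub (hfinE a (hIsub ha).1)
        rw [huni a (hIsub ha).1] at this
        exact this
      exact (hIsub ha).2 S hSa hS2 hcardlt
        ⟨rfl, I, fun e he => (hIsub he).1, hIunc, hIint⟩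
    by_cases hXF : ∃ w : Fin m → V, Function.Injective w ∧ ¬ (XFan Ehat m w).Countable
    · obtain ⟨w, hwinj, hbigX⟩ := hXF
      obtain ⟨v, F, hvinj, hFA, hvF, hwF, hvnw, hP2, hP3, hP4, _, _⟩ :=
        extraction Ehat k m hk hm (fun e he => huni e he.1) hker w hwinj hbigX
      have hCEChat : CEC l Ehat :=
        assemble m l hm hl Ehat w v F hFA hwinj hvinj hvnw hvF hwF hP2 hP3 hP4
      obtain ⟨x, e, h1, h2, h3, h4⟩ := hCEChat
      exact ⟨x, e, h1, fun i => hEhatE (h2 i), h3, h4⟩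
    · push_neg at hXF
      exfalso
      apply hNC
      have hXcnt : ∀ w : Fin m → V, Function.Injective w → (XFan Ehat m w).Countable :=
        fun w hw => hXF w hw
      have hctx0 : ∀ v ∈ (Set.univ : Set V), (InBad Ehat (fun _ => 0) ∅ v).Finite := by
        intro v _
        have hempty : InBad Ehat (fun _ => 0) (∅ : Set V) v = ∅ := by
          apply Set.eq_empty_iff_forall_notMem.mpr
          rintro c ⟨e, he, hv, ⟨z, hz⟩, hsub, _⟩
          exact hsub hz
        rw [hempty]
        exact Set.finite_empty
      obtain ⟨g, hgoff, hgprop⟩ := Crec Ehat m hgood (by omega) hXcnt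
        (#(↥(Set.univ : Set V))) Set.univ ∅ (fun _ => 0) rfl (Set.disjoint_empty _) hctx0
      have hgEhat : ∀ e ∈ Ehat, ∃ a ∈ e, ∃ b ∈ e, g a ≠ g b := by
        intro e he
        obtain ⟨a, ha⟩ := (hgood e he).2.nonempty
        by_contra hcon
        push_neg at hcon
        refine hgprop e he (fun z _ => Or.inl (Set.mem_univ z))
          ⟨a, ha, Set.mem_univ a⟩ ?_
        exact ⟨g a, fun z hz => hcon z hz a ha⟩
      have hcase' : ∀ j, 2 ≤ j → j < k →
          ∃ f : V → ℕ, ∀ S ∈ 𝒦 j, ∃ a ∈ S, ∃ b ∈ S, f a ≠ f b := hcase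
      choose fj hfj using hcase'
      obtain ⟨toNat, htoNat⟩ : ∃ φ : (ℕ × (Fin k → ℕ)) → ℕ, Function.Injective φ :=
        exists_injective_nat _
      refine ⟨fun x => toNat (g x,
        fun idx : Fin k => if h : 2 ≤ (idx : ℕ) then fj idx h idx.isLt x else 0), ?_⟩
      intro e he
      by_cases heh : e ∈ Ehat
      · obtain ⟨a, ha, b, hb, hab⟩ := hgEhat e heh
        refine ⟨a, ha, b, hb, ?_⟩
        intro h
        apply hab
        exact congrArg Prod.fst (htoNat h)
      · have hnot : ¬ (∀ S : Set V, S ⊆ e → 2 ≤ S.ncard → S.ncard < k →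
            S ∉ 𝒦 (S.ncard)) := by
          intro h
          exact heh ⟨he, h⟩
        push_neg at hnot
        obtain ⟨S, hSe, hS2, hSk, hSmem⟩ := hnot
        obtain ⟨a, ha, b, hb, hab⟩ := hfj S.ncard hS2 hSk S hSmem
        refine ⟨a, hSe ha, b, hSe hb, ?_⟩
        intro h
        apply hab
        have h2 := congrArg Prod.snd (htoNat h)
        have h4 := congrFun h2 ⟨S.ncard, hSk⟩
        simpa only [dif_pos hS2] using h4

end Main

end ObligatoryAux

end ObligatoryAuxSection


/-- For every integer `k ≥ 2` and every even `ℓ ≥ 4`, the `k`-uniform expansion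
`C^{(k)}_ℓ` of the `ℓ`-cycle is obligatory. -/
theorem expansion_even_cycle_obligatory (k l : ℕ) (hk : 2 ≤ k) (hl : 4 ≤ l)
    (hleven : Even l) (V : Type u) (E : Set (Set V)) (hUnif : ∀ e ∈ E, e.ncard = k)
    (hChr : Cardinal.aleph 1 ≤ chromaticNumber V E) :
    ContainsExpansionCycle k l E := by
  classical
  obtain ⟨m, hm⟩ := hleven
  have hlm : l = 2 * m := by omega
  have hm2 : 2 ≤ m := by omega
  have hNC : ¬ ObligatoryAux.ColorableN E := by
    rintro ⟨f, hf⟩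
    have hproper : IsProperColoring E (fun v => ULift.up.{u} (f v)) := by
      intro e he
      obtain ⟨a, ha, b, hb, hab⟩ := hf e he
      exact ⟨a, ha, b, hb, fun h => hab (congrArg ULift.down h)⟩
    have hmem : (#(ULift.{u} ℕ)) ∈ {κ : Cardinal.{u} | ∃ (α : Type u) (f : V → α),
        #α = κ ∧ IsProperColoring E f} := ⟨ULift.{u} ℕ, _, rfl, hproper⟩
    have hle : chromaticNumber V E ≤ #(ULift.{u} ℕ) := csInf_le' hmem
    have hcon : Cardinal.aleph 1 ≤ ℵ₀ := by
      refine le_trans hChr (le_trans hle ?_)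
      rw [Cardinal.mk_uLift]
      simp
    exact absurd hcon (not_le.mpr Cardinal.aleph0_lt_aleph_one)
  have hres := ObligatoryAux.main_internal m l hm2 hlm k hk V E hUnif hNC
  obtain ⟨x, e, h1, h2, h3, h4⟩ := hres
  exact ⟨x, e, h1, h2, h3, h4⟩
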